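/- Let f₀ : ℝ² → ℝ² be an area- and orientation-preserving diffeomorphism with a saddle connection Σ between hyperbolic fixed points a, b, parametrized by α : ℝ → Σ with f₀(α(t)) = α(t+1). Then the vector field η defined along Σ by η(α(t)) = J α′(t), where J is the standard 2×2 symplectic matrix, is an adapted normal vector field: it is nonzero, orthogonal to TΣ, and satisfies f₀*⟨η, Y⟩ = ⟨η, f₀* Y⟩ for every vector field Y : Σ → ℝ². -/

import Mathlib

open Filter Topology

/-- Euclidean inner product on `ℝ²`. -/
def dot2 (u v : ℝ × ℝ) : ℝ := u.1 * v.1 + u.2 * v.2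

/-- The standard `2×2` symplectic matrix `J`, so that `ω(u,v) = ⟨u, J v⟩`. -/
def Jmat (v : ℝ × ℝ) : ℝ × ℝ := (v.2, -v.1)

/-- Let `f` be an area- and orientation-preserving (i.e. symplectic)
diffeomorphism of `ℝ²` with a saddle connection between hyperbolic fixed points `a`,
`b`, parametrized by `α : ℝ → ℝ²` with `f(α(t)) = α(t+1)`.  Then `η(α(t)) = J α′(t)` is
an adapted normal vector field: it is nonzero, orthogonal to the tangent direction
`α′(t)` of `Σ`, and satisfies `f₀*⟨η, Y⟩ = ⟨η, f₀* Y⟩` for every vector field `Y`. -/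
theorem adapted_normal_field_planar
    (f g : ℝ × ℝ → ℝ × ℝ)
    (hfg : Function.LeftInverse g f) (hgf : Function.RightInverse g f)
    (hfC : ContDiff ℝ 1 f) (hgC : ContDiff ℝ 1 g)
    -- `f` is symplectic: `Df^T J Df = J`, i.e. `ω(Df u, Df v) = ω(u,v)`
    (hsymp : ∀ p u v,
      dot2 (fderiv ℝ f p u) (Jmat (fderiv ℝ f p v)) = dot2 u (Jmat v))
    (α : ℝ → ℝ × ℝ) (hαC : ContDiff ℝ 1 α) (hαinj : Function.Injective α)
    (hα' : ∀ t, deriv α t ≠ 0)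
    (hαf : ∀ t, f (α t) = α (t + 1))
    (a b : ℝ × ℝ) (hfa : f a = a) (hfb : f b = b)
    (hlima : Tendsto α atBot (𝓝 a)) (hlimb : Tendsto α atTop (𝓝 b)) :
    ∀ t : ℝ,
      Jmat (deriv α t) ≠ 0 ∧
      dot2 (Jmat (deriv α t)) (deriv α t) = 0 ∧
      (∀ Y : ℝ × ℝ → ℝ × ℝ,
        dot2 (Jmat (deriv α (t + 1))) (Y (α (t + 1)))
          = dot2 (Jmat (deriv α t)) (fderiv ℝ g (α (t + 1)) (Y (α (t + 1))))) := by
  have hfd : Differentiable ℝ f := hfC.differentiable one_ne_zero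
  have hgd : Differentiable ℝ g := hgC.differentiable one_ne_zero
  have hαd : Differentiable ℝ α := hαC.differentiable one_ne_zero
  intro t
  refine ⟨?_, ?_, ?_⟩
  · intro h
    have h1 : (deriv α t).2 = 0 ∧ (deriv α t).1 = 0 := by
      simpa [Jmat, Prod.ext_iff, neg_eq_zero] using h
    exact hα' t (Prod.ext_iff.mpr ⟨h1.2, h1.1⟩)
  · simp [dot2, Jmat]; ring
  · intro Y
    set p := α (t + 1) with hp
    have hgp : g p = α t := by rw [hp, ← hαf t, hfg]
    -- derivative of f along α : Df (α t) (α' t) = α' (t+1)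
    have hDf : fderiv ℝ f (α t) (deriv α t) = deriv α (t + 1) := by
      have h1 : HasDerivAt (fun s => f (α s)) (fderiv ℝ f (α t) (deriv α t)) t :=
        (hfd (α t)).hasFDerivAt.comp_hasDerivAt t (hαd t).hasDerivAt
      have h2 : HasDerivAt (fun s => α (s + 1)) (deriv α (t + 1)) t := by
        exact HasDerivAt.comp_add_const t 1 (hαd (t + 1)).hasDerivAt
      have h3 : (fun s => f (α s)) = fun s => α (s + 1) := funext fun s => hαf s
      rw [h3] at h1
      exact h1.unique h2
    -- Df (g p) ∘ Dg p = id
    have hinv : ∀ w, fderiv ℝ f (g p) (fderiv ℝ g p w) = w := by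
      intro w
      have h1 : HasFDerivAt (f ∘ g)
          ((fderiv ℝ f (g p)).comp (fderiv ℝ g p)) p :=
        (hfd (g p)).hasFDerivAt.comp p (hgd p).hasFDerivAt
      have h2 : f ∘ g = id := funext fun x => hgf x
      rw [h2] at h1
      have h3 := h1.unique (hasFDerivAt_id p)
      have := congrArg (fun L => L w) h3
      simpa using this
    have key := hsymp (α t) (fderiv ℝ g p (Y p)) (deriv α t)
    rw [← hgp] at key
    rw [hinv, hgp, hDf] at key
    have hswap : ∀ u v : ℝ × ℝ, dot2 (Jmat u) v = dot2 v (Jmat u) := by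
      intro u v; simp [dot2, Jmat]; ring
    rw [hswap, hswap (deriv α t)]
    exact key
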